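/- Let n ≥ 2 and m = (m_1,…,m_n) ∈ ℝ^n with m_0 := 1, and suppose (m_1,…,m_{n−1}) is B-realizable on ℕ₀, so that L_P(m) = 0 for some P ∈ 𝒫_{n−i} with i ∈ {1,2}. Then (m_1,…,m_n) is realizable on ℕ₀ if and only if L_{x^i P}(m) = 0, and in that case it is B-realizable. -/
import Mathlib


open Polynomial

/-- `Lf P m = Σ_k p_k m_k`, the affine form associated to a polynomial `P`. -/
noncomputable def Lf (P : Polynomial ℝ) (m : ℕ → ℝ) : ℝ := P.sum fun k a => a * m k

/-- `𝒫_j`: monic real polynomials of degree `j` with `j` distinct roots in `ℕ₀`,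
nonnegative on `ℕ₀`. -/
def PolyP (j : ℕ) (P : Polynomial ℝ) : Prop :=
  P.Monic ∧ P.natDegree = j ∧
    (∃ S : Finset ℕ, S.card = j ∧ P = ∏ a ∈ S, (X - C (a : ℝ))) ∧
    ∀ x : ℕ, 0 ≤ P.eval (x : ℝ)

/-- `(m_1,…,m_j)` (with `m 0 = 1`) is realizable on `ℕ₀`: there is a probability
measure on the nonnegative integers whose `k`-th moment is `m k` for `k ≤ j`. -/
def RealizableN0 (j : ℕ) (m : ℕ → ℝ) : Prop :=
  ∃ μ : ℕ → ℝ, (∀ x, 0 ≤ μ x) ∧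
    ∀ k, k ≤ j → HasSum (fun x : ℕ => (x : ℝ) ^ k * μ x) (m k)

/-- I-realizability on `ℕ₀`. -/
def IRealizable (j : ℕ) (m : ℕ → ℝ) : Prop :=
  RealizableN0 j m ∧ ∀ P : Polynomial ℝ, PolyP j P ∨ PolyP (j - 1) P → 0 < Lf P m

/-- B-realizability on `ℕ₀`. -/
def BRealizable (j : ℕ) (m : ℕ → ℝ) : Prop :=
  RealizableN0 j m ∧ ∃ P : Polynomial ℝ, (PolyP j P ∨ PolyP (j - 1) P) ∧ Lf P m = 0

/-- If a measure `μ` realizes the moments `m k` for `k ≤ j` and `Q` has degree `≤ j`,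
then `Σ_x Q(x) μ(x)` converges to `L_Q(m)`. -/
lemma hasSum_eval (Q : Polynomial ℝ) (μ m : ℕ → ℝ) (j : ℕ) (hd : Q.natDegree ≤ j)
    (hμ : ∀ k, k ≤ j → HasSum (fun x : ℕ => (x : ℝ) ^ k * μ x) (m k)) :
    HasSum (fun x : ℕ => Q.eval (x : ℝ) * μ x) (Lf Q m) := by
  have h1 : Lf Q m = ∑ k ∈ Finset.range (j + 1), Q.coeff k * m k :=
    Q.sum_over_range' (f := fun k a => a * m k) (fun _ => zero_mul _) (j + 1) (Nat.lt_succ_of_le hd)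
  have h2 : HasSum (fun x : ℕ => ∑ k ∈ Finset.range (j + 1), Q.coeff k * ((x : ℝ) ^ k * μ x))
      (∑ k ∈ Finset.range (j + 1), Q.coeff k * m k) :=
    hasSum_sum fun k hk =>
      (hμ k (Nat.lt_succ_iff.mp (Finset.mem_range.mp hk))).mul_left _
  have hfun : (fun x : ℕ => Q.eval (x : ℝ) * μ x)
      = fun x : ℕ => ∑ k ∈ Finset.range (j + 1), Q.coeff k * ((x : ℝ) ^ k * μ x) := by
    funext x
    rw [eval_eq_sum_range' (Nat.lt_succ_of_le hd), Finset.sum_mul]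
    exact Finset.sum_congr rfl fun k _ => by ring
  rw [h1, hfun]
  exact h2

/-- If `(m_1,…,m_{n-1})` is B-realizable, with `L_P(m) = 0` for `P ∈ 𝒫_{n-i}`,
`i ∈ {1,2}`, then `(m_1,…,m_n)` is realizable iff `L_{x^i P}(m) = 0`,
and in that case it is B-realizable. -/
theorem Brealizable_step (n : ℕ) (hn : 2 ≤ n) (m : ℕ → ℝ) (hm0 : m 0 = 1)
    (hB : BRealizable (n - 1) m)
    (i : ℕ) (hi : i = 1 ∨ i = 2) (P : Polynomial ℝ) (hP : PolyP (n - i) P)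
    (hLP : Lf P m = 0) :
    (RealizableN0 n m ↔ Lf (X ^ i * P) m = 0) ∧
      (Lf (X ^ i * P) m = 0 → BRealizable n m) := by
  obtain ⟨⟨μ, hμ0, hμ⟩, -⟩ := hB
  obtain ⟨hPm, hPd, ⟨S, hScard, hSP⟩, hPpos⟩ := hP
  have hi12 : 1 ≤ i ∧ i ≤ 2 := by rcases hi with rfl | rfl <;> omega
  -- roots of P
  have hPz : ∀ x : ℕ, x ∈ S → P.eval (x : ℝ) = 0 := by
    intro x hx
    rw [hSP, eval_prod]
    exact Finset.prod_eq_zero hx (by simp)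
  have hPnz : ∀ x : ℕ, x ∉ S → P.eval (x : ℝ) ≠ 0 := by
    intro x hx
    rw [hSP, eval_prod]
    refine Finset.prod_ne_zero_iff.mpr fun s hs => ?_
    simp only [eval_sub, eval_X, eval_C, sub_ne_zero, Ne, Nat.cast_inj]
    rintro rfl; exact hx hs
  -- any nonneg measure whose P-sum is 0 is supported on S
  have supp : ∀ ν : ℕ → ℝ, (∀ x, 0 ≤ ν x) →
      HasSum (fun x : ℕ => P.eval (x : ℝ) * ν x) 0 → ∀ x ∉ S, ν x = 0 := by
    intro ν hν0 hsum x hx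
    have h1 : P.eval (x : ℝ) * ν x ≤ 0 :=
      le_hasSum hsum x fun j _ => mul_nonneg (hPpos j) (hν0 j)
    have h2 : 0 ≤ P.eval (x : ℝ) * ν x := mul_nonneg (hPpos x) (hν0 x)
    rcases mul_eq_zero.mp (le_antisymm h1 h2) with h | h
    · exact absurd h (hPnz x hx)
    · exact h
  have hPdeg1 : P.natDegree ≤ n - 1 := by omega
  have hμP : HasSum (fun x : ℕ => P.eval (x : ℝ) * μ x) 0 := by
    have := hasSum_eval P μ m (n - 1) hPdeg1 hμ
    rwa [hLP] at this
  have hμS : ∀ x ∉ S, μ x = 0 := supp μ hμ0 hμP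
  set sk : ℕ → ℝ := fun k => ∑ x ∈ S, (x : ℝ) ^ k * μ x with hsk_def
  have hsk : ∀ k, HasSum (fun x : ℕ => (x : ℝ) ^ k * μ x) (sk k) := fun k =>
    hasSum_sum_of_ne_finset_zero fun x hx => by rw [hμS x hx, mul_zero]
  have hms : ∀ k ≤ n - 1, m k = sk k := fun k hk => (hμ k hk).unique (hsk k)
  set Q : Polynomial ℝ := X ^ i * P with hQ_def
  have hQm : Q.Monic := (monic_X_pow i).mul hPm
  have hQd : Q.natDegree = n := by
    rw [hQ_def, natDegree_mul (pow_ne_zero i X_ne_zero) hPm.ne_zero, natDegree_X_pow, hPd]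
    omega
  have hQz : ∀ x : ℕ, x ∈ S → Q.eval (x : ℝ) = 0 := by
    intro x hx; rw [hQ_def, eval_mul, hPz x hx, mul_zero]
  -- backward direction: Lf Q m = 0 → RealizableN0 n m
  have hback : Lf Q m = 0 → RealizableN0 n m := by
    intro hL
    have heval : ∀ x : ℕ, Q.eval (x : ℝ) = ∑ k ∈ Finset.range (n + 1), Q.coeff k * (x : ℝ) ^ k :=
      fun x => eval_eq_sum_range' (by omega) _
    have eq2 : ∑ k ∈ Finset.range (n + 1), Q.coeff k * sk k = 0 := by
      have swap : ∑ x ∈ S, Q.eval (x : ℝ) * μ x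
          = ∑ k ∈ Finset.range (n + 1), Q.coeff k * sk k := by
        calc ∑ x ∈ S, Q.eval (x : ℝ) * μ x
            = ∑ x ∈ S, ∑ k ∈ Finset.range (n + 1), Q.coeff k * ((x : ℝ) ^ k * μ x) := by
              refine Finset.sum_congr rfl fun x _ => ?_
              rw [heval x, Finset.sum_mul]
              exact Finset.sum_congr rfl fun k _ => by ring
          _ = ∑ k ∈ Finset.range (n + 1), ∑ x ∈ S, Q.coeff k * ((x : ℝ) ^ k * μ x) :=
              Finset.sum_comm
          _ = ∑ k ∈ Finset.range (n + 1), Q.coeff k * sk k := by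
              refine Finset.sum_congr rfl fun k _ => ?_
              rw [hsk_def, Finset.mul_sum]
      rw [← swap]
      exact Finset.sum_eq_zero fun x hx => by rw [hQz x hx, zero_mul]
    have eq1 : ∑ k ∈ Finset.range (n + 1), Q.coeff k * m k = 0 := by
      have h := Q.sum_over_range' (f := fun k a => a * m k) (fun _ => zero_mul _) (n + 1)
        (by rw [hQd]; omega)
      rw [← h]; exact hL
    have hQcn : Q.coeff n = 1 := by
      have := hQm.coeff_natDegree; rwa [hQd] at this
    have key : m n = sk n := by
      have hsplit : ∑ k ∈ Finset.range (n + 1), (Q.coeff k * m k - Q.coeff k * sk k)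
          = m n - sk n := by
        rw [Finset.sum_range_succ, Finset.sum_eq_zero (fun k hk => by
          rw [hms k (by have := Finset.mem_range.mp hk; omega)]; ring), zero_add, hQcn,
          one_mul, one_mul]
      rw [Finset.sum_sub_distrib, eq1, eq2, sub_zero] at hsplit
      linarith
    refine ⟨μ, hμ0, fun k hk => ?_⟩
    rcases Nat.lt_or_ge k n with h | h
    · exact hμ k (by omega)
    · have hkn : k = n := by omega
      rw [hkn, key]; exact hsk n
  -- forward direction
  have hfwd : RealizableN0 n m → Lf Q m = 0 := by
    rintro ⟨ν, hν0, hν⟩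
    have hνP : HasSum (fun x : ℕ => P.eval (x : ℝ) * ν x) 0 := by
      have := hasSum_eval P ν m n (by omega) hν
      rwa [hLP] at this
    have hνS : ∀ x ∉ S, ν x = 0 := supp ν hν0 hνP
    have hQν : HasSum (fun x : ℕ => Q.eval (x : ℝ) * ν x) (Lf Q m) :=
      hasSum_eval Q ν m n (le_of_eq hQd) hν
    have hzero : (fun x : ℕ => Q.eval (x : ℝ) * ν x) = fun _ => (0 : ℝ) := by
      funext x
      by_cases hx : x ∈ S
      · rw [hQz x hx, zero_mul]
      · rw [hνS x hx, mul_zero]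
    rw [hzero] at hQν
    exact (hasSum_zero.unique hQν).symm
  refine ⟨⟨hfwd, hback⟩, fun hL => ⟨hback hL, ?_⟩⟩
  -- produce a boundary polynomial of degree n - 1
  rcases hi with rfl | rfl
  · exact ⟨P, Or.inr (by simpa using ⟨hPm, hPd, ⟨S, hScard, hSP⟩, hPpos⟩), hLP⟩
  · -- i = 2 : take R = (X - a) * P with a the least natural not in S
    have hex : ∃ a : ℕ, a ∉ S := S.exists_notMem
    set a := Nat.find hex with ha_def
    have haS : a ∉ S := Nat.find_spec hex
    have hamin : ∀ b < a, b ∈ S := fun b hb => not_not.mp (Nat.find_min hex hb)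
    set R : Polynomial ℝ := (X - C (a : ℝ)) * P with hR_def
    have hRm : R.Monic := (monic_X_sub_C _).mul hPm
    have hRd : R.natDegree = n - 1 := by
      rw [hR_def, natDegree_mul (X_sub_C_ne_zero _) hPm.ne_zero, natDegree_X_sub_C, hPd]
      omega
    have hRz : ∀ x : ℕ, x ∈ S → R.eval (x : ℝ) = 0 := by
      intro x hx; rw [hR_def, eval_mul, hPz x hx, mul_zero]
    have hRpos : ∀ x : ℕ, 0 ≤ R.eval (x : ℝ) := by
      intro x
      rcases Nat.lt_or_ge x a with h | h
      · rw [hRz x (hamin x h)]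
      · rw [hR_def, eval_mul, eval_sub, eval_X, eval_C]
        exact mul_nonneg (by simpa [sub_nonneg] using (Nat.cast_le (α := ℝ)).mpr h) (hPpos x)
    have hRprod : R = ∏ b ∈ insert a S, (X - C (b : ℝ)) := by
      rw [Finset.prod_insert haS, hR_def, hSP]
    have hRcard : (insert a S).card = n - 1 := by
      rw [Finset.card_insert_of_notMem haS, hScard]; omega
    have hLR : Lf R m = 0 := by
      have hRν : HasSum (fun x : ℕ => R.eval (x : ℝ) * μ x) (Lf R m) :=
        hasSum_eval R μ m (n - 1) (le_of_eq hRd) hμ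
      have hzero : (fun x : ℕ => R.eval (x : ℝ) * μ x) = fun _ => (0 : ℝ) := by
        funext x
        by_cases hx : x ∈ S
        · rw [hRz x hx, zero_mul]
        · rw [hμS x hx, mul_zero]
      rw [hzero] at hRν
      exact (hasSum_zero.unique hRν).symm
    exact ⟨R, Or.inr ⟨hRm, hRd, ⟨insert a S, hRcard, hRprod⟩, hRpos⟩, hLR⟩
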